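/- Soundness of the overall planner (Theorem 1): Let φ be an STL formula in the disjunction-free positive normal form fragment with progress-based decomposition (P_φ, T_φ, Λ_φ), where P_φ = P^R ∪ P^I splits into reachability and invariance conditions, and let λ⃗* be a feasible assignment (a nonnegative-integer assignment of Λ_φ satisfying every constraint in T_φ). Let (x̃_0,t_0), …, (x̃_n,t_n) be timed waypoints with 0 = t_0 ≤ t_1 ≤ … ≤ t_n, such that for every reachability condition R(a_Λ,b_Λ,μ) ∈ P^R there exists an index i with t_i ∈ [a_Λ(λ⃗*), b_Λ(λ⃗*)] and h_μ(x̃_i) ≥ 0. Suppose the signal s : ℕ → ℝ^n satisfies: (i) s(t_i) = x̃_i for all i ∈ {0,…,n}; and (ii) for every invariance condition I(a_Λ,b_Λ,μ) ∈ P^I and every t ∈ [a_Λ(λ⃗*), b_Λ(λ⃗*)], h_μ(s t) ≥ 0. Then s ⊨ φ. -/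

import Mathlib

/-- Until-prefix formulas of the fragment: built only from atomic predicates,
conjunction, and bounded always (no `F` or `U`). Interval bounds satisfy `a ≤ b`. -/
inductive PrefixSTL (n : ℕ) : Type where
  | atom (h : (Fin n → ℝ) → ℝ)
  | conj (φ₁ φ₂ : PrefixSTL n)
  | always (a b : ℕ) (hab : a ≤ b) (φ : PrefixSTL n)

/-- STL formulas of the disjunction-free positive normal form fragment over `ℝ^n`:
atomic predicates, conjunction, bounded eventually, bounded always, and bounded until
whose prefix contains no `F` or `U`. Interval bounds satisfy `a ≤ b`. -/
inductive STL (n : ℕ) : Type where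
  | atom (h : (Fin n → ℝ) → ℝ)
  | conj (φ₁ φ₂ : STL n)
  | ev (a b : ℕ) (hab : a ≤ b) (φ : STL n)
  | always (a b : ℕ) (hab : a ≤ b) (φ : STL n)
  | untl (ψ : PrefixSTL n) (a b : ℕ) (hab : a ≤ b) (φ : STL n)

/-- Boolean semantics of prefix formulas: `PrefixSTL.Sat s ψ t` means `s_t ⊨ ψ`. -/
def PrefixSTL.Sat {n : ℕ} (s : ℕ → Fin n → ℝ) : PrefixSTL n → ℕ → Prop
  | .atom h, t => 0 ≤ h (s t)
  | .conj φ₁ φ₂, t => PrefixSTL.Sat s φ₁ t ∧ PrefixSTL.Sat s φ₂ t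
  | .always a b _ φ, t => ∀ t', t + a ≤ t' → t' ≤ t + b → PrefixSTL.Sat s φ t'

/-- Boolean semantics: `STL.Sat s φ t` means `s_t ⊨ φ`. -/
def STL.Sat {n : ℕ} (s : ℕ → Fin n → ℝ) : STL n → ℕ → Prop
  | .atom h, t => 0 ≤ h (s t)
  | .conj φ₁ φ₂, t => STL.Sat s φ₁ t ∧ STL.Sat s φ₂ t
  | .ev a b _ φ, t => ∃ t', t + a ≤ t' ∧ t' ≤ t + b ∧ STL.Sat s φ t'
  | .always a b _ φ, t => ∀ t', t + a ≤ t' → t' ≤ t + b → STL.Sat s φ t'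
  | .untl ψ a b _ φ, t => ∃ t', t + a ≤ t' ∧ t' ≤ t + b ∧ STL.Sat s φ t' ∧
      ∀ t'', t ≤ t'' → t'' ≤ t' → PrefixSTL.Sat s ψ t''

/-- A symbolic progress condition over `nv` time variables: a kind flag
(`reach = true` for reachability `R`, `reach = false` for invariance `I`),
symbolic interval endpoints evaluated on assignments of the time variables,
and the evaluation function of the atomic predicate. -/
structure ProgCond (n nv : ℕ) : Type where
  reach : Bool
  lo : (Fin nv → ℕ) → ℕ
  hi : (Fin nv → ℕ) → ℕ
  pred : (Fin n → ℝ) → ℝ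

/-- Satisfaction of a progress condition on the signal `s` under the
time-variable assignment `lam`. -/
def ProgCond.Holds {n nv : ℕ} (c : ProgCond n nv) (lam : Fin nv → ℕ)
    (s : ℕ → Fin n → ℝ) : Prop :=
  if c.reach then ∃ t, c.lo lam ≤ t ∧ t ≤ c.hi lam ∧ 0 ≤ c.pred (s t)
  else ∀ t, c.lo lam ≤ t → t ≤ c.hi lam → 0 ≤ c.pred (s t)

/-- Reindex the time variables of a progress condition. -/
def ProgCond.comap {n nv nv' : ℕ} (c : ProgCond n nv)
    (f : (Fin nv' → ℕ) → Fin nv → ℕ) : ProgCond n nv' :=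
  ⟨c.reach, fun lam => c.lo (f lam), fun lam => c.hi (f lam), c.pred⟩

/-- Shift both endpoints of a progress condition by `k`. -/
def ProgCond.shiftBy {n nv : ℕ} (c : ProgCond n nv) (k : (Fin nv → ℕ) → ℕ) :
    ProgCond n nv :=
  ⟨c.reach, fun lam => c.lo lam + k lam, fun lam => c.hi lam + k lam, c.pred⟩

/-- A decomposition triple `(ℙ_φ, 𝕋_φ, Λ_φ)`: `nv` time variables, one interval
constraint per variable, and a finite list of symbolic progress conditions. -/
structure Decomp (n : ℕ) : Type where
  nv : ℕ
  constr : Fin nv → ℕ × ℕ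
  conds : List (ProgCond n nv)

/-- Feasible assignments: nonnegative integer assignments of the time variables
satisfying every interval constraint. -/
def Decomp.Feasible {n : ℕ} (D : Decomp n) (lam : Fin D.nv → ℕ) : Prop :=
  ∀ v, (D.constr v).1 ≤ lam v ∧ lam v ≤ (D.constr v).2

/-- Decomposition of an (F/U-free) until-prefix formula into invariance
conditions with constant endpoints `(c, d, h_μ)`. -/
def pdecomp {n : ℕ} : PrefixSTL n → List (ℕ × ℕ × ((Fin n → ℝ) → ℝ))
  | .atom h => [(0, 0, h)]
  | .conj φ₁ φ₂ => pdecomp φ₁ ++ pdecomp φ₂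
  | .always a b _ (.atom h) => [(a, b, h)]
  | .always a b _ φ =>
      (List.range (b + 1 - a)).flatMap fun k =>
        (pdecomp φ).map fun c => (c.1 + (a + k), c.2.1 + (a + k), c.2.2)

/-- The recursive progress-based decomposition `(ℙ_φ, 𝕋_φ, Λ_φ)` of an STL formula. -/
def decomp {n : ℕ} : STL n → Decomp n
  | .atom h => ⟨0, Fin.elim0, [⟨true, fun _ => 0, fun _ => 0, h⟩]⟩
  | .conj φ₁ φ₂ =>
      let D₁ := decomp φ₁
      let D₂ := decomp φ₂
      ⟨D₁.nv + D₂.nv,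
        fun v => Fin.addCases (motive := fun _ => ℕ × ℕ) D₁.constr D₂.constr v,
        (D₁.conds.map fun c => c.comap fun lam i => lam (Fin.castAdd D₂.nv i)) ++
        (D₂.conds.map fun c => c.comap fun lam i => lam (Fin.natAdd D₁.nv i))⟩
  | .ev a b _ φ =>
      let D := decomp φ
      ⟨D.nv + 1,
        Fin.snoc D.constr (a, b),
        D.conds.map fun c =>
          (c.comap fun lam i => lam i.castSucc).shiftBy fun lam => lam (Fin.last D.nv)⟩
  | .always a b _ (.atom h) =>
      ⟨0, Fin.elim0, [⟨false, fun _ => a, fun _ => b, h⟩]⟩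
  | .always a b _ φ =>
      let D := decomp φ
      ⟨(b + 1 - a) * D.nv,
        fun v => D.constr (finProdFinEquiv.symm v).2,
        (List.finRange (b + 1 - a)).flatMap fun k =>
          D.conds.map fun c =>
            (c.comap fun lam i => lam (finProdFinEquiv (k, i))).shiftBy
              fun _ => a + (k : ℕ)⟩
  | .untl ψ a b _ φ =>
      let D := decomp φ
      ⟨D.nv + 1,
        Fin.snoc D.constr (a, b),
        (D.conds.map fun c =>
          (c.comap fun lam i => lam i.castSucc).shiftBy fun lam => lam (Fin.last D.nv)) ++
        ((pdecomp ψ).map fun c =>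
          ⟨false, fun _ => c.1, fun lam => c.2.1 + lam (Fin.last D.nv), c.2.2⟩)⟩

lemma holds_of_holds {n nv nv' : ℕ} {c : ProgCond n nv} {c' : ProgCond n nv'}
    {lam : Fin nv → ℕ} {lam' : Fin nv' → ℕ} {s : ℕ → Fin n → ℝ}
    (h : c.Holds lam s)
    (hr : c'.reach = c.reach) (hp : c'.pred = c.pred)
    (hlo : c'.lo lam' = c.lo lam) (hhi : c'.hi lam' = c.hi lam) :
    c'.Holds lam' s := by
  unfold ProgCond.Holds at h ⊢
  rw [hr, hp, hlo, hhi]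
  exact h

lemma psat_of_holds {n : ℕ} (s : ℕ → Fin n → ℝ) :
    ∀ (ψ : PrefixSTL n) (k : ℕ),
      (∀ p ∈ pdecomp ψ, ∀ t, k + p.1 ≤ t → t ≤ k + p.2.1 → 0 ≤ p.2.2 (s t)) →
      PrefixSTL.Sat s ψ k := by
  intro ψ
  induction ψ with
  | atom h =>
      intro k H
      exact H (0, 0, h) (by simp [pdecomp]) k (by omega) (by omega)
  | conj φ₁ φ₂ ih₁ ih₂ =>
      intro k H
      refine ⟨ih₁ k ?_, ih₂ k ?_⟩ <;>
        · intro p hp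
          exact H p (by simp [pdecomp, hp])
  | always a b hab φ ih =>
      cases φ with
      | atom h =>
          intro k H t' h1 h2
          exact H (a, b, h) (by simp [pdecomp]) t' h1 h2
      | conj φ₁ φ₂ =>
          intro k H t' h1 h2
          apply ih
          rintro ⟨p1, p2, ph⟩ hp t ht1 ht2
          have ht1' : t' + p1 ≤ t := ht1
          have ht2' : t ≤ t' + p2 := ht2
          refine H (p1 + (a + (t' - k - a)), p2 + (a + (t' - k - a)), ph) ?_ t
            (show k + (p1 + (a + (t' - k - a))) ≤ t by omega)
            (show t ≤ k + (p2 + (a + (t' - k - a))) by omega)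
          simp only [pdecomp, List.mem_flatMap, List.mem_range, List.mem_map]
          exact ⟨t' - k - a, by omega, (p1, p2, ph), hp, rfl⟩
      | always a' b' hab' φ' =>
          intro k H t' h1 h2
          apply ih
          rintro ⟨p1, p2, ph⟩ hp t ht1 ht2
          have ht1' : t' + p1 ≤ t := ht1
          have ht2' : t ≤ t' + p2 := ht2
          refine H (p1 + (a + (t' - k - a)), p2 + (a + (t' - k - a)), ph) ?_ t
            (show k + (p1 + (a + (t' - k - a))) ≤ t by omega)
            (show t ≤ k + (p2 + (a + (t' - k - a))) by omega)
          simp only [pdecomp, List.mem_flatMap, List.mem_range, List.mem_map]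
          exact ⟨t' - k - a, by omega, (p1, p2, ph), hp, rfl⟩

lemma sat_of_holds {n : ℕ} (s : ℕ → Fin n → ℝ) :
    ∀ (φ : STL n) (lam : Fin (decomp φ).nv → ℕ), (decomp φ).Feasible lam →
      ∀ k : ℕ, (∀ c ∈ (decomp φ).conds, (c.shiftBy fun _ => k).Holds lam s) →
      STL.Sat s φ k := by
  intro φ
  induction φ with
  | atom h =>
      intro lam _ k H
      have := H ⟨true, fun _ => 0, fun _ => 0, h⟩ (by simp [decomp]; exact List.mem_singleton.2 rfl)
      simp only [ProgCond.Holds, ProgCond.shiftBy, if_true] at this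
      obtain ⟨t, h1, h2, h3⟩ := this
      have : t = k := by omega
      subst this
      exact h3
  | conj φ₁ φ₂ ih₁ ih₂ =>
      intro lam hlam k H
      constructor
      · refine ih₁ (fun i => lam (Fin.castAdd _ i)) (fun v => ?_) k (fun c hc => ?_)
        · simpa [decomp, Decomp.Feasible] using hlam (Fin.castAdd _ v)
        · refine holds_of_holds
            (H ((c.comap fun lam i => lam (Fin.castAdd _ i))) ?_) rfl rfl rfl rfl
          simp only [decomp, List.mem_append, List.mem_map]
          exact List.mem_append.2 (Or.inl (List.mem_map.2 ⟨c, hc, rfl⟩))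
      · refine ih₂ (fun i => lam (Fin.natAdd _ i)) (fun v => ?_) k (fun c hc => ?_)
        · simpa [decomp, Decomp.Feasible] using hlam (Fin.natAdd _ v)
        · refine holds_of_holds
            (H ((c.comap fun lam i => lam (Fin.natAdd _ i))) ?_) rfl rfl rfl rfl
          simp only [decomp, List.mem_append, List.mem_map]
          exact List.mem_append.2 (Or.inr (List.mem_map.2 ⟨c, hc, rfl⟩))
  | ev a b hab φ ih =>
      intro lam hlam k H
      have hlast := hlam (Fin.last (decomp φ).nv)
      simp only [decomp, Decomp.Feasible, Fin.snoc_last] at hlast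
      refine ⟨k + lam (Fin.last (decomp φ).nv), by omega, by omega, ?_⟩
      refine ih (fun i => lam i.castSucc) (fun v => ?_) _ (fun c hc => ?_)
      · simpa [decomp, Decomp.Feasible, Fin.snoc_castSucc] using hlam v.castSucc
      · refine holds_of_holds
          (H (((c.comap fun lam i => lam i.castSucc).shiftBy
            fun lam => lam (Fin.last (decomp φ).nv))) ?_) rfl rfl ?_ ?_
        · simp only [decomp, List.mem_map]
          exact List.mem_map.2 ⟨c, hc, rfl⟩
        · simp only [ProgCond.shiftBy, ProgCond.comap]; omega
        · simp only [ProgCond.shiftBy, ProgCond.comap]; omega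
  | always a b hab φ ih =>
      cases φ with
      | atom h =>
          intro lam hlam k H t' h1 h2
          have := H ⟨false, fun _ => a, fun _ => b, h⟩ (by simp [decomp]; exact List.mem_singleton.2 rfl)
          simp only [ProgCond.Holds, ProgCond.shiftBy, if_false, Bool.false_eq_true] at this
          exact this t' (by omega) (by omega)
      | conj φ₁ φ₂ =>
          intro lam hlam k H t' h1 h2
          have hjlt : t' - k - a < b + 1 - a := by omega
          set j : Fin (b + 1 - a) := ⟨t' - k - a, hjlt⟩ with hj
          have hjval : (j : ℕ) = t' - k - a := rfl
          refine ih (fun i => lam (finProdFinEquiv (j, i))) (fun v => ?_) t' (fun c hc => ?_)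
          · have := hlam (finProdFinEquiv (j, v))
            simp only [decomp, Decomp.Feasible] at this
            have e : (finProdFinEquiv.symm (finProdFinEquiv (j, v))).2 = v :=
              congrArg Prod.snd (finProdFinEquiv.symm_apply_apply (j, v))
            exact (congrArg (fun w => ((decomp _).constr w).1 ≤ lam (finProdFinEquiv (j, v)) ∧
              lam (finProdFinEquiv (j, v)) ≤ ((decomp _).constr w).2) e).mp this
          · refine holds_of_holds
              (H (((c.comap fun lam i => lam (finProdFinEquiv (j, i))).shiftBy
                fun _ => a + (j : ℕ))) ?_) rfl rfl ?_ ?_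
            · simp only [decomp, List.mem_flatMap, List.mem_map, List.mem_append]
              exact List.mem_flatMap.2 ⟨j, List.mem_finRange j, List.mem_map.2 ⟨c, hc, rfl⟩⟩
            · simp only [ProgCond.shiftBy, ProgCond.comap]; omega
            · simp only [ProgCond.shiftBy, ProgCond.comap]; omega
      | ev a'' b'' hab'' φ'' =>
          intro lam hlam k H t' h1 h2
          have hjlt : t' - k - a < b + 1 - a := by omega
          set j : Fin (b + 1 - a) := ⟨t' - k - a, hjlt⟩ with hj
          have hjval : (j : ℕ) = t' - k - a := rfl
          refine ih (fun i => lam (finProdFinEquiv (j, i))) (fun v => ?_) t' (fun c hc => ?_)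
          · have := hlam (finProdFinEquiv (j, v))
            simp only [decomp, Decomp.Feasible] at this
            have e : (finProdFinEquiv.symm (finProdFinEquiv (j, v))).2 = v :=
              congrArg Prod.snd (finProdFinEquiv.symm_apply_apply (j, v))
            exact (congrArg (fun w => ((decomp _).constr w).1 ≤ lam (finProdFinEquiv (j, v)) ∧
              lam (finProdFinEquiv (j, v)) ≤ ((decomp _).constr w).2) e).mp this
          · refine holds_of_holds
              (H (((c.comap fun lam i => lam (finProdFinEquiv (j, i))).shiftBy
                fun _ => a + (j : ℕ))) ?_) rfl rfl ?_ ?_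
            · simp only [decomp, List.mem_flatMap, List.mem_map, List.mem_append]
              exact List.mem_flatMap.2 ⟨j, List.mem_finRange j, List.mem_map.2 ⟨c, hc, rfl⟩⟩
            · simp only [ProgCond.shiftBy, ProgCond.comap]; omega
            · simp only [ProgCond.shiftBy, ProgCond.comap]; omega
      | always a'' b'' hab'' φ'' =>
          intro lam hlam k H t' h1 h2
          have hjlt : t' - k - a < b + 1 - a := by omega
          set j : Fin (b + 1 - a) := ⟨t' - k - a, hjlt⟩ with hj
          have hjval : (j : ℕ) = t' - k - a := rfl
          refine ih (fun i => lam (finProdFinEquiv (j, i))) (fun v => ?_) t' (fun c hc => ?_)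
          · have := hlam (finProdFinEquiv (j, v))
            simp only [decomp, Decomp.Feasible] at this
            have e : (finProdFinEquiv.symm (finProdFinEquiv (j, v))).2 = v :=
              congrArg Prod.snd (finProdFinEquiv.symm_apply_apply (j, v))
            exact (congrArg (fun w => ((decomp _).constr w).1 ≤ lam (finProdFinEquiv (j, v)) ∧
              lam (finProdFinEquiv (j, v)) ≤ ((decomp _).constr w).2) e).mp this
          · refine holds_of_holds
              (H (((c.comap fun lam i => lam (finProdFinEquiv (j, i))).shiftBy
                fun _ => a + (j : ℕ))) ?_) rfl rfl ?_ ?_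
            · simp only [decomp, List.mem_flatMap, List.mem_map, List.mem_append]
              exact List.mem_flatMap.2 ⟨j, List.mem_finRange j, List.mem_map.2 ⟨c, hc, rfl⟩⟩
            · simp only [ProgCond.shiftBy, ProgCond.comap]; omega
            · simp only [ProgCond.shiftBy, ProgCond.comap]; omega
      | untl ψ'' a'' b'' hab'' φ'' =>
          intro lam hlam k H t' h1 h2
          have hjlt : t' - k - a < b + 1 - a := by omega
          set j : Fin (b + 1 - a) := ⟨t' - k - a, hjlt⟩ with hj
          have hjval : (j : ℕ) = t' - k - a := rfl
          refine ih (fun i => lam (finProdFinEquiv (j, i))) (fun v => ?_) t' (fun c hc => ?_)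
          · have := hlam (finProdFinEquiv (j, v))
            simp only [decomp, Decomp.Feasible] at this
            have e : (finProdFinEquiv.symm (finProdFinEquiv (j, v))).2 = v :=
              congrArg Prod.snd (finProdFinEquiv.symm_apply_apply (j, v))
            exact (congrArg (fun w => ((decomp _).constr w).1 ≤ lam (finProdFinEquiv (j, v)) ∧
              lam (finProdFinEquiv (j, v)) ≤ ((decomp _).constr w).2) e).mp this
          · refine holds_of_holds
              (H (((c.comap fun lam i => lam (finProdFinEquiv (j, i))).shiftBy
                fun _ => a + (j : ℕ))) ?_) rfl rfl ?_ ?_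
            · simp only [decomp, List.mem_flatMap, List.mem_map, List.mem_append]
              exact List.mem_flatMap.2 ⟨j, List.mem_finRange j, List.mem_map.2 ⟨c, hc, rfl⟩⟩
            · simp only [ProgCond.shiftBy, ProgCond.comap]; omega
            · simp only [ProgCond.shiftBy, ProgCond.comap]; omega
  | untl ψ a b hab φ ih =>
      intro lam hlam k H
      have hlast := hlam (Fin.last (decomp φ).nv)
      simp only [decomp, Decomp.Feasible, Fin.snoc_last] at hlast
      refine ⟨k + lam (Fin.last (decomp φ).nv), by omega, by omega, ?_, ?_⟩
      · refine ih (fun i => lam i.castSucc) (fun v => ?_) _ (fun c hc => ?_)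
        · simpa [decomp, Decomp.Feasible, Fin.snoc_castSucc] using hlam v.castSucc
        · refine holds_of_holds
            (H (((c.comap fun lam i => lam i.castSucc).shiftBy
              fun lam => lam (Fin.last (decomp φ).nv))) ?_) rfl rfl ?_ ?_
          · simp only [decomp, List.mem_append, List.mem_map]
            exact List.mem_append.2 (Or.inl (List.mem_map.2 ⟨c, hc, rfl⟩))
          · simp only [ProgCond.shiftBy, ProgCond.comap]; omega
          · simp only [ProgCond.shiftBy, ProgCond.comap]; omega
      · intro t'' ht1 ht2
        apply psat_of_holds
        rintro ⟨p1, p2, ph⟩ hp t hpt1 hpt2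
        have hpt1' : t'' + p1 ≤ t := hpt1
        have hpt2' : t ≤ t'' + p2 := hpt2
        have := H ⟨false, fun _ => p1, fun lam => p2 + lam (Fin.last (decomp φ).nv), ph⟩ ?_
        · simp only [ProgCond.Holds, ProgCond.shiftBy, if_false, Bool.false_eq_true] at this
          exact this t (by omega) (by omega)
        · simp only [decomp, List.mem_append, List.mem_map]
          exact List.mem_append.2 (Or.inr (List.mem_map.2 ⟨(p1, p2, ph), hp, rfl⟩))

/-- **Soundness of the overall planner (Theorem 1).**
Let `lam` be a feasible assignment of the decomposition of `φ`, and let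
`(wx 0, wt 0), …, (wx m, wt m)` be timed waypoints with `wt 0 = 0` and nondecreasing
times such that every reachability condition of the decomposition is witnessed at some
waypoint inside its evaluated window. If the signal `s` passes through all waypoints at
their assigned times and satisfies every invariance condition of the decomposition over
its full evaluated active interval, then `s ⊨ φ`. -/
theorem overall_planner_sound {n : ℕ} (φ : STL n) (s : ℕ → Fin n → ℝ)
    (lam : Fin (decomp φ).nv → ℕ) (hlam : (decomp φ).Feasible lam)
    (m : ℕ) (wx : Fin (m + 1) → Fin n → ℝ) (wt : Fin (m + 1) → ℕ)
    (hwt0 : wt 0 = 0) (hmono : Monotone wt)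
    (hreach : ∀ c ∈ (decomp φ).conds, c.reach = true →
      ∃ i : Fin (m + 1), c.lo lam ≤ wt i ∧ wt i ≤ c.hi lam ∧ 0 ≤ c.pred (wx i))
    (hway : ∀ i : Fin (m + 1), s (wt i) = wx i)
    (hinv : ∀ c ∈ (decomp φ).conds, c.reach = false →
      ∀ t, c.lo lam ≤ t → t ≤ c.hi lam → 0 ≤ c.pred (s t)) :
    STL.Sat s φ 0 := by
  apply sat_of_holds s φ lam hlam 0
  intro c hc
  cases hr : c.reach with
  | true =>
      obtain ⟨i, hi1, hi2, hi3⟩ := hreach c hc hr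
      simp only [ProgCond.Holds, ProgCond.shiftBy, hr, if_true]
      exact ⟨wt i, by omega, by omega, by rw [hway]; exact hi3⟩
  | false =>
      simp only [ProgCond.Holds, ProgCond.shiftBy, hr, if_false, Bool.false_eq_true]
      intro t h1 h2
      exact hinv c hc hr t (by omega) (by omega)
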